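/- If ψ ∈ B varies regularly of index θ at infinity with 0 < θ < 1 (i.e., ψ(λr)/ψ(r) → λ^θ as r → ∞ for every λ > 0), then ψ is pseudoconcave in a neighbourhood of infinity: there is a concave positive function ψ₁(r) defined for r ≫ 1 such that both ψ/ψ₁ and ψ₁/ψ are bounded on some neighbourhood of ∞. -/
import Mathlib


open Filter Set

lemma interp_aux (r₀ : ℝ) (hr₀ : 0 < r₀) (b : ℕ → ℝ) (hb : ∀ n, 0 < b n)
    (c₁ c₂ : ℝ) (hc₁ : 1 < c₁) (hcc : c₂ * (c₂ - 1) ≤ 2 * (c₁ - 1))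
    (hlow : ∀ n, c₁ * b n ≤ b (n + 1)) (hhigh : ∀ n, b (n + 1) ≤ c₂ * b n) :
    ∃ ψ₁ : ℝ → ℝ, ConcaveOn ℝ (Set.Ici r₀) ψ₁ ∧
      ∀ r : ℝ, r₀ ≤ r → ∃ k : ℕ, r₀ * 2 ^ k ≤ r ∧ r ≤ r₀ * 2 ^ (k + 1) ∧
        b k ≤ ψ₁ r ∧ ψ₁ r ≤ b (k + 1) := by
  have hc₂ : 1 < c₂ := by nlinarith [hlow 0, hhigh 0, hb 0]
  set x : ℕ → ℝ := fun n => r₀ * 2 ^ n with hx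
  set sl : ℕ → ℝ := fun n => (b (n + 1) - b n) / (r₀ * 2 ^ n) with hsl
  set L : ℕ → ℝ → ℝ := fun n r => b n + sl n * (r - x n) with hL
  have h2n : ∀ n : ℕ, (0:ℝ) < r₀ * 2 ^ n := fun n => by positivity
  have hslpos : ∀ n, 0 < sl n := by
    intro n
    exact div_pos (by nlinarith [hlow n, hb n]) (h2n n)
  have hslmono : ∀ n, sl (n + 1) ≤ sl n := by
    intro n
    rw [hsl]
    simp only
    rw [div_le_div_iff₀ (h2n (n+1)) (h2n n)]
    have key : b (n + 2) - b (n + 1) ≤ 2 * (b (n + 1) - b n) := by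
      nlinarith [hhigh (n + 1), hhigh n, hlow n, hb n, hb (n + 1)]
    calc (b (n + 1 + 1) - b (n + 1)) * (r₀ * 2 ^ n)
        ≤ 2 * (b (n + 1) - b n) * (r₀ * 2 ^ n) := mul_le_mul_of_nonneg_right key (h2n n).le
      _ = (b (n + 1) - b n) * (r₀ * 2 ^ (n + 1)) := by ring
  have hL' : ∀ n r, L n r = b (n + 1) + sl n * (r - x (n + 1)) := by
    intro n r
    have hd : sl n * (r₀ * 2 ^ n) = b (n + 1) - b n := div_mul_cancel₀ _ (h2n n).ne'
    simp only [hL, hsl, hx] at *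
    have h2 : (2:ℝ) ^ (n + 1) = 2 * 2 ^ n := by ring
    rw [h2]
    linear_combination hd
  have hLstep : ∀ n r, L (n + 1) r - L n r = (sl (n + 1) - sl n) * (r - x (n + 1)) := by
    intro n r
    rw [hL' n r]
    simp only [hL]
    ring
  have hxmono : ∀ {m n : ℕ}, m ≤ n → x m ≤ x n := by
    intro m n h
    exact mul_le_mul_of_nonneg_left (pow_le_pow_right₀ (by norm_num) h) hr₀.le
  have hup : ∀ n r, r ≤ x (n + 1) → L n r ≤ L (n + 1) r := by
    intro n r h
    nlinarith [hLstep n r, hslmono n]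
  have hdown : ∀ n r, x (n + 1) ≤ r → L (n + 1) r ≤ L n r := by
    intro n r h
    nlinarith [hLstep n r, hslmono n]
  have hchain_up : ∀ k m r, k ≤ m → r ≤ x (k + 1) → L k r ≤ L m r := by
    intro k m r hkm hr
    induction m, hkm using Nat.le_induction with
    | base => exact le_refl _
    | succ m hkm ih =>
        exact ih.trans (hup m r (hr.trans (hxmono (by omega))))
  have hchain_down : ∀ k m r, m ≤ k → x k ≤ r → L k r ≤ L m r := by
    intro k m r hmk hr
    induction k, hmk using Nat.le_induction with
    | base => exact le_refl _
    | succ k hmk ih =>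
        exact (hdown k r (le_trans (hxmono (by omega)) hr)).trans
          (ih (le_trans (hxmono (by omega)) hr))
  set idx : ℝ → ℕ := fun r => Nat.log 2 ⌊r / r₀⌋₊ with hidxdef
  have hidx : ∀ r, r₀ ≤ r → x (idx r) ≤ r ∧ r < x (idx r + 1) := by
    intro r hr
    have h1 : 1 ≤ r / r₀ := (one_le_div hr₀).2 hr
    have hm1 : 1 ≤ ⌊r / r₀⌋₊ := Nat.le_floor (by exact_mod_cast h1)
    set m := ⌊r / r₀⌋₊ with hm
    have hlog1 : (2:ℕ) ^ Nat.log 2 m ≤ m := Nat.pow_log_le_self 2 (by omega)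
    have hlog2 : m < 2 ^ (Nat.log 2 m + 1) := Nat.lt_pow_succ_log_self (by norm_num) m
    constructor
    · have : ((2:ℝ)) ^ Nat.log 2 m ≤ r / r₀ := by
        calc ((2:ℝ)) ^ Nat.log 2 m = ((2 ^ Nat.log 2 m : ℕ) : ℝ) := by push_cast; ring
        _ ≤ (m : ℝ) := by exact_mod_cast hlog1
        _ ≤ r / r₀ := Nat.floor_le (by positivity)
      calc x (idx r) = r₀ * 2 ^ Nat.log 2 m := rfl
      _ ≤ r₀ * (r / r₀) := by nlinarith
      _ = r := by field_simp
    · have h2 : r / r₀ < (m : ℝ) + 1 := Nat.lt_floor_add_one _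
      have h3 : (m : ℝ) + 1 ≤ (2:ℝ) ^ (Nat.log 2 m + 1) := by
        have : (m + 1 : ℕ) ≤ 2 ^ (Nat.log 2 m + 1) := hlog2
        calc (m : ℝ) + 1 = ((m + 1 : ℕ) : ℝ) := by push_cast; ring
        _ ≤ ((2 ^ (Nat.log 2 m + 1) : ℕ) : ℝ) := by exact_mod_cast this
        _ = (2:ℝ) ^ (Nat.log 2 m + 1) := by push_cast; ring
      have h4 : r / r₀ < (2:ℝ) ^ (Nat.log 2 m + 1) := lt_of_lt_of_le h2 h3
      calc r = r₀ * (r / r₀) := by field_simp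
      _ < r₀ * 2 ^ (Nat.log 2 m + 1) := by
          exact mul_lt_mul_of_pos_left h4 hr₀
  have hmin : ∀ r, r₀ ≤ r → ∀ m, L (idx r) r ≤ L m r := by
    intro r hr m
    obtain ⟨h1, h2⟩ := hidx r hr
    rcases le_total (idx r) m with h | h
    · exact hchain_up (idx r) m r h h2.le
    · exact hchain_down (idx r) m r h h1
  refine ⟨fun r => L (idx r) r, ⟨convex_Ici r₀, ?_⟩, ?_⟩
  · intro p hp q hq a c ha hc hac
    simp only [smul_eq_mul]
    have hz : r₀ ≤ a * p + c * q := by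
      have := (convex_Ici r₀) hp hq ha hc hac
      simpa using this
    have haff : L (idx (a * p + c * q)) (a * p + c * q)
        = a * L (idx (a * p + c * q)) p + c * L (idx (a * p + c * q)) q := by
      simp only [hL]
      linear_combination (sl (idx (a * p + c * q)) * x (idx (a * p + c * q)) - b (idx (a * p + c * q))) * hac
    rw [haff]
    have h1 := hmin p hp (idx (a * p + c * q))
    have h2 := hmin q hq (idx (a * p + c * q))
    nlinarith
  · intro r hr
    obtain ⟨h1, h2⟩ := hidx r hr
    refine ⟨idx r, h1, h2.le, ?_, ?_⟩
    · have : 0 ≤ sl (idx r) * (r - x (idx r)) :=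
        mul_nonneg (hslpos _).le (by linarith)
      simp only [hL]; linarith
    · show L (idx r) r ≤ b (idx r + 1)
      rw [hL' (idx r) r]
      have : sl (idx r) * (r - x (idx r + 1)) ≤ 0 :=
        mul_nonpos_of_nonneg_of_nonpos (hslpos _).le (by linarith)
      linarith

open MeasureTheory in
lemma doubling_aux (ψ : ℝ → ℝ) (θ : ℝ) (hθ0 : 0 < θ) (hθ1 : θ < 1)
    (hmeas : Measurable ψ)
    (hpos : ∀ r : ℝ, 0 < r → 0 < ψ r)
    (hreg : ∀ l : ℝ, 0 < l →
      Tendsto (fun r : ℝ => ψ (l * r) / ψ r) atTop (nhds (l ^ θ))) :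
    ∃ R₀ : ℝ, 1 ≤ R₀ ∧ ∀ r : ℝ, R₀ ≤ r → ∀ u ∈ Set.Icc (1:ℝ) 2,
      ψ (u * r) ≤ 9 * ψ r ∧ ψ r ≤ 9 * ψ (u * r) := by
  by_contra hcon
  have H : ∀ n : ℕ, ∃ p : ℝ × ℝ, ((n : ℝ) ≤ p.1 ∧ 1 ≤ p.1) ∧ p.2 ∈ Set.Icc (1:ℝ) 2 ∧
      ¬(ψ (p.2 * p.1) ≤ 9 * ψ p.1 ∧ ψ p.1 ≤ 9 * ψ (p.2 * p.1)) := by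
    intro n
    by_contra h
    push_neg at h
    refine hcon ⟨max n 1, le_max_right _ _, fun r hr u hu => ?_⟩
    exact h (r, u) ⟨le_trans (le_max_left _ _) hr, le_trans (le_max_right _ _) hr⟩ hu
  choose p hp1 hp2 hp3 using H
  set r : ℕ → ℝ := fun n => (p n).1 with hrdef
  set u : ℕ → ℝ := fun n => (p n).2 with hudef
  have hr1 : ∀ n, 0 < r n := fun n => lt_of_lt_of_le one_pos (hp1 n).2
  have hrtop : Tendsto r atTop atTop :=
    tendsto_atTop_mono (fun n => (hp1 n).1) tendsto_natCast_atTop_atTop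
  have hurtop : Tendsto (fun n => u n * r n) atTop atTop :=
    tendsto_atTop_mono (fun n => le_mul_of_one_le_left (hr1 n).le (hp2 n).1) hrtop
  have key : ∀ ρ : ℕ → ℝ, Tendsto ρ atTop atTop → ∀ A B : ℝ, 0 < A →
      ∃ t ⊆ Set.Icc A B, MeasurableSet t ∧ volume t ≤ ENNReal.ofReal (1/4) ∧
        TendstoUniformlyOn (fun n (v : ℝ) => ψ (v * ρ n) / ψ (ρ n)) (fun v : ℝ => v ^ θ)
          atTop (Set.Icc A B \ t) := by
    intro ρ hρ A B hA
    refine MeasureTheory.tendstoUniformlyOn_of_ae_tendsto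
      (fun n => ((hmeas.comp (measurable_id.mul_const (ρ n))).div_const (ψ (ρ n))).stronglyMeasurable)
      (Real.continuous_rpow_const hθ0.le).stronglyMeasurable
      measurableSet_Icc (by rw [Real.volume_Icc]; exact ENNReal.ofReal_ne_top) ?_ (by norm_num)
    refine ae_of_all _ (fun v hv => ?_)
    exact (hreg v (lt_of_lt_of_le hA hv.1)).comp hρ
  obtain ⟨tE, htEsub, htEmeas, htEvol, hE⟩ := key r hrtop 1 4 one_pos
  obtain ⟨tF, htFsub, htFmeas, htFvol, hF⟩ := key (fun n => u n * r n) hurtop 1 2 one_pos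
  rw [Metric.tendstoUniformlyOn_iff] at hE hF
  obtain ⟨N₁, hN₁⟩ := eventually_atTop.mp (hE (1/2) (by norm_num))
  obtain ⟨N₂, hN₂⟩ := eventually_atTop.mp (hF (1/2) (by norm_num))
  set n := max N₁ N₂ with hn
  set U := u n with hU
  set Rn := r n with hRn
  have hU1 : 1 ≤ U := (hp2 n).1
  have hU2 : U ≤ 2 := (hp2 n).2
  have hRnpos : 0 < Rn := hr1 n
  have hUpos : 0 < U := lt_of_lt_of_le one_pos hU1
  -- find a good point s
  have hSne : (Set.Icc (1:ℝ) 2 \ (tF ∪ (fun s => s * U) ⁻¹' tE)).Nonempty := by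
    by_contra hS
    rw [Set.not_nonempty_iff_eq_empty, Set.diff_eq_empty] at hS
    have hvol : volume (Set.Icc (1:ℝ) 2) ≤ volume tF + volume ((fun s : ℝ => s * U) ⁻¹' tE) :=
      le_trans (measure_mono hS) (measure_union_le _ _)
    have hpre : volume ((fun s : ℝ => s * U) ⁻¹' tE) ≤ ENNReal.ofReal (1/4) := by
      rw [Real.volume_preimage_mul_right hUpos.ne' tE]
      calc ENNReal.ofReal |U⁻¹| * volume tE ≤ 1 * ENNReal.ofReal (1/4) := by
            refine mul_le_mul' ?_ htEvol
            rw [abs_of_pos (inv_pos.mpr hUpos)]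
            exact ENNReal.ofReal_le_one.mpr (inv_le_one_of_one_le₀ hU1)
        _ = ENNReal.ofReal (1/4) := one_mul _
    rw [Real.volume_Icc] at hvol
    have : ENNReal.ofReal (2 - 1) ≤ ENNReal.ofReal (1/4) + ENNReal.ofReal (1/4) :=
      le_trans hvol (add_le_add htFvol hpre)
    rw [← ENNReal.ofReal_add (by norm_num) (by norm_num)] at this
    have := (ENNReal.ofReal_le_ofReal_iff (by norm_num)).mp this
    linarith
  obtain ⟨s, hsIcc, hsnot⟩ := hSne
  have hsF : s ∈ Set.Icc (1:ℝ) 2 \ tF := ⟨hsIcc, fun h => hsnot (Set.mem_union_left _ h)⟩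
  have hs1 : 1 ≤ s := hsIcc.1
  have hs2 : s ≤ 2 := hsIcc.2
  have hsUmem : s * U ∈ Set.Icc (1:ℝ) 4 := by
    constructor
    · nlinarith
    · nlinarith
  have hsE : s * U ∈ Set.Icc (1:ℝ) 4 \ tE :=
    ⟨hsUmem, fun h => hsnot (Set.mem_union_right _ h)⟩
  have h1 := hN₁ n (le_max_left _ _) (s * U) hsE
  have h2 := hN₂ n (le_max_right _ _) s hsF
  -- bounds on rpow values
  have hsU1 : (1:ℝ) ≤ s * U := hsUmem.1
  have hv1 : 1 ≤ (s * U) ^ θ := Real.one_le_rpow hsU1 hθ0.le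
  have hv4 : (s * U) ^ θ ≤ 4 := by
    calc (s * U) ^ θ ≤ (s * U) ^ (1:ℝ) :=
          Real.rpow_le_rpow_of_exponent_le hsU1 hθ1.le
      _ = s * U := Real.rpow_one _
      _ ≤ 4 := hsUmem.2
  have hw1 : 1 ≤ s ^ θ := Real.one_le_rpow hs1 hθ0.le
  have hw2 : s ^ θ ≤ 2 := by
    calc s ^ θ ≤ s ^ (1:ℝ) := Real.rpow_le_rpow_of_exponent_le hs1 hθ1.le
      _ = s := Real.rpow_one _
      _ ≤ 2 := hs2
  rw [Real.dist_eq, abs_sub_lt_iff] at h1 h2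
  have harg : s * (U * Rn) = s * U * Rn := by ring
  rw [harg] at h2
  set P := ψ (s * U * Rn) with hP
  have hψR : 0 < ψ Rn := hpos _ hRnpos
  have hψU : 0 < ψ (U * Rn) := hpos _ (mul_pos hUpos hRnpos)
  have hPpos : 0 < P := hpos _ (by positivity)
  -- h1 : (s*U)^θ - P / ψ Rn < 1/2 ∧ P / ψ Rn - (s*U)^θ < 1/2
  have hA1 : (1/2 : ℝ) * ψ Rn < P := by
    have : (1/2 : ℝ) < P / ψ Rn := by linarith [h1.1]
    calc (1/2 : ℝ) * ψ Rn < (P / ψ Rn) * ψ Rn := by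
          exact mul_lt_mul_of_pos_right this hψR
      _ = P := div_mul_cancel₀ _ hψR.ne'
  have hA2 : P < (9/2 : ℝ) * ψ Rn := by
    have : P / ψ Rn < 9/2 := by linarith [h1.2]
    calc P = (P / ψ Rn) * ψ Rn := (div_mul_cancel₀ _ hψR.ne').symm
      _ < (9/2 : ℝ) * ψ Rn := mul_lt_mul_of_pos_right this hψR
  have hB1 : (1/2 : ℝ) * ψ (U * Rn) < P := by
    have : (1/2 : ℝ) < P / ψ (U * Rn) := by linarith [h2.1]
    calc (1/2 : ℝ) * ψ (U * Rn) < (P / ψ (U * Rn)) * ψ (U * Rn) :=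
          mul_lt_mul_of_pos_right this hψU
      _ = P := div_mul_cancel₀ _ hψU.ne'
  have hB2 : P < (5/2 : ℝ) * ψ (U * Rn) := by
    have : P / ψ (U * Rn) < 5/2 := by linarith [h2.2]
    calc P = (P / ψ (U * Rn)) * ψ (U * Rn) := (div_mul_cancel₀ _ hψU.ne').symm
      _ < (5/2 : ℝ) * ψ (U * Rn) := mul_lt_mul_of_pos_right this hψU
  exact hp3 n ⟨by linarith, by linarith⟩

/-- If ψ ∈ B varies regularly of index θ ∈ (0,1) at infinity, then ψ is
pseudoconcave in a neighbourhood of infinity: there are R and a positive concave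
function ψ₁ on [R,∞) such that ψ/ψ₁ and ψ₁/ψ are bounded there. -/
theorem stmt_8 (ψ : ℝ → ℝ) (θ : ℝ) (hθ0 : 0 < θ) (hθ1 : θ < 1)
    (hmeas : Measurable ψ)
    (hpos : ∀ r : ℝ, 0 < r → 0 < ψ r)
    (hbdd : ∀ a b : ℝ, 0 < a → a ≤ b → ∃ C : ℝ, ∀ r ∈ Set.Icc a b, ψ r ≤ C)
    (hinv : ∀ a : ℝ, 0 < a → ∃ C : ℝ, ∀ r : ℝ, a ≤ r → (ψ r)⁻¹ ≤ C)
    (hreg : ∀ l : ℝ, 0 < l →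
      Tendsto (fun r : ℝ => ψ (l * r) / ψ r) atTop (nhds (l ^ θ))) :
    ∃ R : ℝ, 0 < R ∧ ∃ ψ₁ : ℝ → ℝ,
      (∀ r : ℝ, R ≤ r → 0 < ψ₁ r) ∧
      ConcaveOn ℝ (Set.Ici R) ψ₁ ∧
      ∃ C : ℝ, 0 < C ∧ ∀ r : ℝ, R ≤ r →
        ψ r / ψ₁ r ≤ C ∧ ψ₁ r / ψ r ≤ C := by
  obtain ⟨R₀, hR₀1, hdbl⟩ := doubling_aux ψ θ hθ0 hθ1 hmeas hpos hreg
  set q := (2:ℝ) ^ θ with hq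
  have hq1 : 1 < q := by
    rw [hq, Real.one_lt_rpow_iff_of_pos (by norm_num)]
    exact Or.inl ⟨by norm_num, hθ0⟩
  have hq2 : q < 2 := by
    calc q = (2:ℝ) ^ θ := hq
      _ < (2:ℝ) ^ (1:ℝ) := Real.rpow_lt_rpow_of_exponent_lt (by norm_num) hθ1
      _ = 2 := Real.rpow_one 2
  set e := q - 1 with he
  have he0 : 0 < e := by simp only [he]; linarith
  have he1 : e < 1 := by simp only [he]; linarith
  set δ := e * (1 - e) / 6 with hδ
  have hδ0 : 0 < δ := div_pos (mul_pos he0 (by linarith)) (by norm_num)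
  have hδe : δ < e := by nlinarith
  have hc₁ : 1 < q - δ := by simp only [he] at hδe; linarith
  have hcc : (q + δ) * ((q + δ) - 1) ≤ 2 * ((q - δ) - 1) := by
    have hfact : 0 ≤ (1 - e) * (e^2 - 13*e + 18) := by nlinarith
    have hqe : q = 1 + e := by simp only [he]; ring
    rw [hqe]
    have h6 : 6 * δ = e * (1 - e) := by rw [hδ]; ring
    nlinarith [sq_nonneg e, sq_nonneg δ, mul_pos he0 hδ0]
  have h2 := Metric.tendsto_nhds.mp (hreg 2 (by norm_num)) δ hδ0
  obtain ⟨R₁, hR₁⟩ := eventually_atTop.mp h2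
  set r₀ := max (max R₀ R₁) 1 with hr₀def
  have hr₀pos : (0:ℝ) < r₀ := lt_of_lt_of_le one_pos (le_max_right _ _)
  have hr₀R₀ : R₀ ≤ r₀ := le_trans (le_max_left _ _) (le_max_left _ _)
  have hr₀R₁ : R₁ ≤ r₀ := le_trans (le_max_right _ _) (le_max_left _ _)
  set b : ℕ → ℝ := fun n => ψ (r₀ * 2 ^ n) with hbdef
  have hb : ∀ n, 0 < b n := fun n => hpos _ (by positivity)
  have hpow1 : ∀ n : ℕ, (1:ℝ) ≤ 2 ^ n := fun n => one_le_pow₀ (by norm_num)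
  have hratio : ∀ n, (q - δ) * b n ≤ b (n + 1) ∧ b (n + 1) ≤ (q + δ) * b n := by
    intro n
    have hge : R₁ ≤ r₀ * 2 ^ n :=
      le_trans hr₀R₁ (le_mul_of_one_le_right hr₀pos.le (hpow1 n))
    have hd := hR₁ _ hge
    rw [show (2 : ℝ) * (r₀ * 2 ^ n) = r₀ * 2 ^ (n + 1) by ring, ← hq] at hd
    rw [Real.dist_eq, abs_sub_lt_iff] at hd
    have hbn := hb n
    have hbn1 := hb (n + 1)
    have hdiv : b (n + 1) = (b (n + 1) / b n) * b n := (div_mul_cancel₀ _ hbn.ne').symm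
    constructor
    · have h1 : q - δ < b (n + 1) / b n := by
        have := hd.2; simp only [hbdef] at *; linarith
      calc (q - δ) * b n ≤ (b (n + 1) / b n) * b n :=
            mul_le_mul_of_nonneg_right h1.le hbn.le
        _ = b (n + 1) := (div_mul_cancel₀ _ hbn.ne')
    · have h1 : b (n + 1) / b n < q + δ := by
        have := hd.1; simp only [hbdef] at *; linarith
      calc b (n + 1) = (b (n + 1) / b n) * b n := hdiv
        _ ≤ (q + δ) * b n := mul_le_mul_of_nonneg_right h1.le hbn.le
  obtain ⟨ψ₁, hconc, hcomp⟩ := interp_aux r₀ hr₀pos b hb (q - δ) (q + δ) hc₁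
    (by linarith [hcc]) (fun n => (hratio n).1) (fun n => (hratio n).2)
  refine ⟨r₀, hr₀pos, ψ₁, ?_, hconc, 27, by norm_num, ?_⟩
  · intro r hr
    obtain ⟨k, _, _, h3, _⟩ := hcomp r hr
    exact lt_of_lt_of_le (hb k) h3
  · intro r hr
    obtain ⟨k, h1, h2, h3, h4⟩ := hcomp r hr
    have hX : (0:ℝ) < r₀ * 2 ^ k := by positivity
    have hrpos : 0 < r := lt_of_lt_of_le hr₀pos hr
    have hψ₁pos : 0 < ψ₁ r := lt_of_lt_of_le (hb k) h3
    have hψpos : 0 < ψ r := hpos r hrpos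
    have hXR₀ : R₀ ≤ r₀ * 2 ^ k :=
      le_trans hr₀R₀ (le_mul_of_one_le_right hr₀pos.le (hpow1 k))
    set v := r / (r₀ * 2 ^ k) with hv
    have hv1 : 1 ≤ v := (one_le_div hX).2 h1
    have hv2 : v ≤ 2 := by
      rw [hv, div_le_iff₀ hX]
      calc r ≤ r₀ * 2 ^ (k + 1) := h2
        _ = 2 * (r₀ * 2 ^ k) := by ring
    have hdb := hdbl (r₀ * 2 ^ k) hXR₀ v ⟨hv1, hv2⟩
    rw [show v * (r₀ * 2 ^ k) = r from div_mul_cancel₀ r hX.ne'] at hdb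
    have hbk : ψ (r₀ * 2 ^ k) = b k := rfl
    rw [hbk] at hdb
    have hq3 : q + δ ≤ 3 := by simp only [he] at hδe he1 ⊢; linarith
    have hhigh := (hratio k).2
    constructor
    · rw [div_le_iff₀ hψ₁pos]
      linarith [hdb.1, hψ₁pos]
    · rw [div_le_iff₀ hψpos]
      nlinarith [hdb.2, hb k, hb (k + 1)]
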